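/- If square matrices A and B over a ring R satisfy A = UV and B = VU for some matrices U, V over R, then the matrices (I_n - tA) ⊕ I_m and (I_m - tB) ⊕ I_n over R[t] are equivalent via matrices that are products of elementary matrices over R[t]; in particular there exist E, F in the elementary group El(R[t]) with E·((I-tA) ⊕ I)·F = (I-tB) ⊕ I. -/

import Mathlib

open Matrix Polynomial

/-- `E` is an elementary matrix: the identity altered in a single off-diagonal entry. -/
def IsElementary {ι : Type*} [DecidableEq ι] {S : Type*} [Semiring S] (E : Matrix ι ι S) : Prop :=
  ∃ i j c, i ≠ j ∧ E = 1 + Matrix.single i j c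

/-- `E` is a product of elementary matrices. -/
def IsElemProd {ι : Type*} [DecidableEq ι] [Fintype ι] {S : Type*} [Semiring S]
    (E : Matrix ι ι S) : Prop :=
  ∃ L : List (Matrix ι ι S), (∀ X ∈ L, IsElementary X) ∧ E = L.prod

lemma IsElemProd.mul {ι : Type*} [DecidableEq ι] [Fintype ι] {S : Type*} [Semiring S]
    {E F : Matrix ι ι S} (hE : IsElemProd E) (hF : IsElemProd F) : IsElemProd (E * F) := by
  obtain ⟨L1, h1, rfl⟩ := hE
  obtain ⟨L2, h2, rfl⟩ := hF
  exact ⟨L1 ++ L2, by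
    intro X hX
    rcases List.mem_append.1 hX with h | h
    · exact h1 X h
    · exact h2 X h, (List.prod_append ..).symm⟩

lemma mul_list_sum_zero {ι : Type*} [DecidableEq ι] [Fintype ι] {S : Type*} [Ring S]
    (a : Matrix ι ι S) (t : List (Matrix ι ι S)) (h : ∀ y ∈ t, a * y = 0) :
    a * t.sum = 0 := by
  induction t with
  | nil => simp
  | cons b t2 ih =>
    rw [List.sum_cons, mul_add, h b (by simp), zero_add]
    exact ih fun y hy => h y (by simp [hy])

lemma prod_one_add {ι : Type*} [DecidableEq ι] [Fintype ι] {S : Type*} [Ring S]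
    (l : List (Matrix ι ι S)) (h : ∀ x ∈ l, ∀ y ∈ l, x * y = 0) :
    (l.map (fun x => 1 + x)).prod = 1 + l.sum := by
  induction l with
  | nil => simp
  | cons a t ih =>
    have ht : ∀ x ∈ t, ∀ y ∈ t, x * y = 0 := fun x hx y hy =>
      h x (List.mem_cons_of_mem _ hx) y (List.mem_cons_of_mem _ hy)
    have hat : a * t.sum = 0 :=
      mul_list_sum_zero a t fun y hy => h a (by simp) y (by simp [hy])
    simp only [List.map_cons, List.prod_cons, ih ht, List.sum_cons]
    rw [add_mul, one_mul, mul_add, mul_one, hat, add_zero]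
    abel

lemma upper_elemprod {S : Type*} [Ring S] {n m : ℕ} (Bm : Matrix (Fin n) (Fin m) S) :
    IsElemProd (fromBlocks 1 Bm 0 1 : Matrix (Fin n ⊕ Fin m) (Fin n ⊕ Fin m) S) := by
  classical
  set g : Fin n × Fin m → Matrix (Fin n ⊕ Fin m) (Fin n ⊕ Fin m) S :=
    fun p => Matrix.single (Sum.inl p.1) (Sum.inr p.2) (Bm p.1 p.2) with hg
  set l : List (Matrix (Fin n ⊕ Fin m) (Fin n ⊕ Fin m) S) :=
    (Finset.univ : Finset (Fin n × Fin m)).toList.map g with hl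
  refine ⟨l.map (fun x => 1 + x), ?_, ?_⟩
  · intro X hX
    simp only [hl, List.mem_map] at hX
    obtain ⟨x, ⟨p, _, rfl⟩, rfl⟩ := hX
    exact ⟨Sum.inl p.1, Sum.inr p.2, Bm p.1 p.2, by simp, rfl⟩
  · rw [prod_one_add]
    · have hsum : l.sum = fromBlocks 0 Bm 0 0 := by
        rw [hl, Finset.sum_map_toList]
        ext i j
        rw [Matrix.sum_apply]
        rcases i with i | i <;> rcases j with j | j <;>
          simp [hg, Matrix.single, Fintype.sum_prod_type, ite_and,
            Finset.sum_ite_eq, Finset.sum_ite_eq', fromBlocks]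
      rw [hsum]
      ext i j
      rcases i with i | i <;> rcases j with j | j <;>
        simp [fromBlocks, Matrix.one_apply]
    · intro x hx y hy
      simp only [hl, List.mem_map] at hx hy
      obtain ⟨p, _, rfl⟩ := hx
      obtain ⟨q, _, rfl⟩ := hy
      exact Matrix.single_mul_single_of_ne (h := Sum.inr_ne_inl) ..

lemma lower_elemprod {S : Type*} [Ring S] {n m : ℕ} (Cm : Matrix (Fin m) (Fin n) S) :
    IsElemProd (fromBlocks 1 0 Cm 1 : Matrix (Fin n ⊕ Fin m) (Fin n ⊕ Fin m) S) := by
  classical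
  set g : Fin m × Fin n → Matrix (Fin n ⊕ Fin m) (Fin n ⊕ Fin m) S :=
    fun p => Matrix.single (Sum.inr p.1) (Sum.inl p.2) (Cm p.1 p.2) with hg
  set l : List (Matrix (Fin n ⊕ Fin m) (Fin n ⊕ Fin m) S) :=
    (Finset.univ : Finset (Fin m × Fin n)).toList.map g with hl
  refine ⟨l.map (fun x => 1 + x), ?_, ?_⟩
  · intro X hX
    simp only [hl, List.mem_map] at hX
    obtain ⟨x, ⟨p, _, rfl⟩, rfl⟩ := hX
    exact ⟨Sum.inr p.1, Sum.inl p.2, Cm p.1 p.2, by simp, rfl⟩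
  · rw [prod_one_add]
    · have hsum : l.sum = fromBlocks 0 0 Cm 0 := by
        rw [hl, Finset.sum_map_toList]
        ext i j
        rw [Matrix.sum_apply]
        rcases i with i | i <;> rcases j with j | j <;>
          simp [hg, Matrix.single, Fintype.sum_prod_type, ite_and,
            Finset.sum_ite_eq, Finset.sum_ite_eq', fromBlocks]
      rw [hsum]
      ext i j
      rcases i with i | i <;> rcases j with j | j <;>
        simp [fromBlocks, Matrix.one_apply]
    · intro x hx y hy
      simp only [hl, List.mem_map] at hx hy
      obtain ⟨p, _, rfl⟩ := hx
      obtain ⟨q, _, rfl⟩ := hy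
      exact Matrix.single_mul_single_of_ne (h := Sum.inl_ne_inr) ..

/-- If `A = UV` and `B = VU`, then `(I - tA) ⊕ I_m` and `(I - tB) ⊕ I_n` are equivalent
via products of elementary matrices over `R[t]`. -/
theorem stmt7 {R : Type*} [Ring R] {n m : ℕ}
    (A : Matrix (Fin n) (Fin n) R) (B : Matrix (Fin m) (Fin m) R)
    (U : Matrix (Fin n) (Fin m) R) (V : Matrix (Fin m) (Fin n) R)
    (hA : A = U * V) (hB : B = V * U) :
    ∃ E F : Matrix (Fin n ⊕ Fin m) (Fin n ⊕ Fin m) (Polynomial R),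
      IsElemProd E ∧ IsElemProd F ∧
      E * fromBlocks (1 - (Polynomial.X : Polynomial R) • A.map (fun r => Polynomial.C r))
            (0 : Matrix (Fin n) (Fin m) (Polynomial R))
            (0 : Matrix (Fin m) (Fin n) (Polynomial R)) 1 * F
        = (Matrix.reindex (Equiv.sumComm (Fin m) (Fin n)) (Equiv.sumComm (Fin m) (Fin n)))
            (fromBlocks (1 - (Polynomial.X : Polynomial R) • B.map (fun r => Polynomial.C r))
              (0 : Matrix (Fin m) (Fin n) (Polynomial R))
              (0 : Matrix (Fin n) (Fin m) (Polynomial R)) 1) := by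
  set u : Matrix (Fin n) (Fin m) (Polynomial R) := U.map (fun r => Polynomial.C r) with hu
  set v : Matrix (Fin m) (Fin n) (Polynomial R) :=
    V.map (fun r => Polynomial.X * Polynomial.C r) with hv
  have key1 : ∀ a b : R, C a * (Polynomial.X * C b) = Polynomial.X * C (a * b) := fun a b => by
    rw [← mul_assoc, ← (Polynomial.commute_X (C a)).eq, mul_assoc, ← Polynomial.C_mul]
  have key2 : ∀ a b : R, (Polynomial.X * C a) * C b = Polynomial.X * C (a * b) := fun a b => by
    rw [mul_assoc, ← Polynomial.C_mul]
  have huv : u * v = (Polynomial.X : Polynomial R) • A.map (fun r => Polynomial.C r) := by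
    subst hA
    refine Matrix.ext fun i j => ?_
    rw [Matrix.mul_apply, Matrix.smul_apply, Matrix.map_apply, Matrix.mul_apply,
      map_sum, smul_eq_mul, Finset.mul_sum]
    simp only [hu, hv, Matrix.map_apply]
    exact Finset.sum_congr rfl fun k _ => key1 _ _
  have hvu : v * u = (Polynomial.X : Polynomial R) • B.map (fun r => Polynomial.C r) := by
    subst hB
    refine Matrix.ext fun i j => ?_
    rw [Matrix.mul_apply, Matrix.smul_apply, Matrix.map_apply, Matrix.mul_apply,
      map_sum, smul_eq_mul, Finset.mul_sum]
    simp only [hu, hv, Matrix.map_apply]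
    exact Finset.sum_congr rfl fun k _ => key2 _ _
  refine ⟨fromBlocks 1 0 (-v) 1 * fromBlocks 1 u 0 1,
          fromBlocks 1 0 v 1 * fromBlocks 1 (-u) 0 1,
          (lower_elemprod _).mul (upper_elemprod _),
          (lower_elemprod _).mul (upper_elemprod _), ?_⟩
  rw [← huv, ← hvu]
  rw [Matrix.reindex_apply, Equiv.sumComm_symm, Equiv.sumComm_apply,
    Matrix.fromBlocks_submatrix_sum_swap_sum_swap]
  simp only [Matrix.fromBlocks_multiply, Matrix.mul_one, Matrix.one_mul, Matrix.mul_zero,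
    Matrix.zero_mul, add_zero, zero_add, Matrix.neg_mul, Matrix.mul_neg]
  rw [Matrix.fromBlocks_inj]
  refine ⟨by abel, ?_, ?_, ?_⟩ <;>
  · simp only [Matrix.sub_mul, Matrix.mul_sub, Matrix.add_mul, Matrix.mul_add,
      Matrix.one_mul, Matrix.mul_one, Matrix.neg_mul, Matrix.mul_neg, Matrix.mul_assoc, neg_neg]
    abel
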